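/- Let g : [a,b] → ℝ be a non-negative continuous function that is not identically zero on any open subinterval of [a,b], and let h : [a,b] → ℝ be continuous and strictly positive. Then for every positive integer n there exists a partition a = t₀ < t₁ < ⋯ < tₙ = b such that the quantities (tᵢ - tᵢ₋₁) · (max of g on [tᵢ₋₁, tᵢ]) · (max of h on [tᵢ₋₁, tᵢ]) are equal for all i = 1, …, n. -/

import Mathlib

open Set

section Aux

lemma sSup_image_Icc_cont {a b : ℝ} {g : ℝ → ℝ}
    (hg : ContinuousOn g (Icc a b)) :
    ContinuousOn (fun p : ℝ × ℝ => sSup (g '' Icc p.1 p.2))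
      {p : ℝ × ℝ | a ≤ p.1 ∧ p.1 ≤ p.2 ∧ p.2 ≤ b} := by
  set S := {p : ℝ × ℝ | a ≤ p.1 ∧ p.1 ≤ p.2 ∧ p.2 ≤ b} with hS
  rw [Metric.continuousOn_iff]
  intro p hp ε hε
  obtain ⟨δ, hδ, hmod⟩ := Metric.uniformContinuousOn_iff.mp
    (isCompact_Icc.uniformContinuousOn_of_continuous hg) (ε/2) (by linarith)
  have key : ∀ u v : ℝ × ℝ, u ∈ S → v ∈ S → dist u.1 v.1 < δ → dist u.2 v.2 < δ →
      sSup (g '' Icc u.1 u.2) ≤ sSup (g '' Icc v.1 v.2) + ε/2 := by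
    intro u v hu hv h1 h2
    obtain ⟨hua, huo, hub⟩ := hu
    obtain ⟨hva, hvo, hvb⟩ := hv
    have hsub_u : Icc u.1 u.2 ⊆ Icc a b := Icc_subset_Icc hua hub
    have hsub_v : Icc v.1 v.2 ⊆ Icc a b := Icc_subset_Icc hva hvb
    refine csSup_le (by simpa using Nonempty.image g (nonempty_Icc.mpr huo)) ?_
    rintro _ ⟨z, hz, rfl⟩
    set w := max v.1 (min z v.2) with hw
    have hwmem : w ∈ Icc v.1 v.2 := by
      constructor
      · exact le_max_left _ _
      · exact max_le hvo (min_le_right _ _)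
    have hzw : dist z w < δ := by
      rw [Real.dist_eq] at h1 h2 ⊢
      rcases le_or_gt z v.1 with hc | hc
      · have : w = v.1 := by
          rw [hw, max_eq_left]
          exact min_le_of_left_le hc
        rw [this, abs_lt]
        constructor <;> linarith [hz.1, (abs_lt.mp h1).1, (abs_lt.mp h1).2]
      rcases le_or_gt v.2 z with hc2 | hc2
      · have : w = v.2 := by
          rw [hw, min_eq_right hc2, max_eq_right hvo]
        rw [this, abs_lt]
        constructor <;> linarith [hz.2, (abs_lt.mp h2).1, (abs_lt.mp h2).2]
      · have : w = z := by
          rw [hw, min_eq_left hc2.le, max_eq_right hc.le]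
        rw [this]; simpa using hδ
    have hgz : g z ≤ g w + ε/2 := by
      have := hmod z (hsub_u hz) w (hsub_v hwmem) hzw
      rw [Real.dist_eq, abs_lt] at this
      linarith [this.1]
    calc g z ≤ g w + ε/2 := hgz
      _ ≤ sSup (g '' Icc v.1 v.2) + ε/2 := by
          gcongr
          exact (hg.mono hsub_v).le_sSup_image_Icc hwmem
  refine ⟨δ, hδ, fun q hq hd => ?_⟩
  have h1 : dist q.1 p.1 < δ := lt_of_le_of_lt (le_max_left _ _) (by rwa [Prod.dist_eq] at hd)
  have h2 : dist q.2 p.2 < δ := lt_of_le_of_lt (le_max_right _ _) (by rwa [Prod.dist_eq] at hd)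
  have k1 := key q p hq hp h1 h2
  have k2 := key p q hp hq (by rwa [dist_comm]) (by rwa [dist_comm])
  rw [Real.dist_eq, abs_lt]
  constructor <;> linarith

noncomputable def Fq (g h : ℝ → ℝ) (x y : ℝ) : ℝ :=
  (y - x) * sSup (g '' Icc x y) * sSup (h '' Icc x y)

variable {a b : ℝ} {g h : ℝ → ℝ}

lemma Smono (hg : ContinuousOn g (Icc a b)) {x y x' y' : ℝ}
    (ha : a ≤ x') (hx : x' ≤ x) (hxy : x ≤ y) (hy : y ≤ y') (hb : y' ≤ b) :
    sSup (g '' Icc x y) ≤ sSup (g '' Icc x' y') := by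
  refine csSup_le_csSup ?_ (by simpa using Nonempty.image g (nonempty_Icc.mpr hxy))
    (image_mono (Icc_subset_Icc hx hy))
  exact (isCompact_Icc.image_of_continuousOn
    (hg.mono (Icc_subset_Icc ha hb))).bddAbove

lemma Sg_pos (hg : ContinuousOn g (Icc a b))
    (hg0 : ∀ t ∈ Set.Icc a b, 0 ≤ g t)
    (hgnz : ∀ p q : ℝ, a ≤ p → p < q → q ≤ b → ∃ t ∈ Set.Ioo p q, g t ≠ 0)
    {x y : ℝ} (ha : a ≤ x) (hxy : x < y) (hb : y ≤ b) :
    0 < sSup (g '' Icc x y) := by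
  obtain ⟨t, ht, htnz⟩ := hgnz x y ha hxy hb
  have htm : t ∈ Icc x y := Ioo_subset_Icc_self ht
  have h1 : 0 < g t := lt_of_le_of_ne (hg0 t (Icc_subset_Icc ha hb htm)) (Ne.symm htnz)
  exact lt_of_lt_of_le h1 ((hg.mono (Icc_subset_Icc ha hb)).le_sSup_image_Icc htm)

lemma Sh_pos (hh : ContinuousOn h (Icc a b))
    (hhpos : ∀ t ∈ Set.Icc a b, 0 < h t)
    {x y : ℝ} (ha : a ≤ x) (hxy : x ≤ y) (hb : y ≤ b) :
    0 < sSup (h '' Icc x y) := by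
  have hx : x ∈ Icc x y := left_mem_Icc.mpr hxy
  exact lt_of_lt_of_le (hhpos x ⟨ha, le_trans hxy hb⟩)
    ((hh.mono (Icc_subset_Icc ha hb)).le_sSup_image_Icc hx)

lemma Fq_pos (hg : ContinuousOn g (Icc a b))
    (hg0 : ∀ t ∈ Set.Icc a b, 0 ≤ g t)
    (hgnz : ∀ p q : ℝ, a ≤ p → p < q → q ≤ b → ∃ t ∈ Set.Ioo p q, g t ≠ 0)
    (hh : ContinuousOn h (Icc a b)) (hhpos : ∀ t ∈ Set.Icc a b, 0 < h t)
    {x y : ℝ} (ha : a ≤ x) (hxy : x < y) (hb : y ≤ b) :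
    0 < Fq g h x y := by
  have h1 := Sg_pos hg hg0 hgnz ha hxy hb
  have h2 := Sh_pos hh hhpos ha hxy.le hb
  have h3 : (0:ℝ) < y - x := by linarith
  unfold Fq; positivity

lemma Fq_self (x : ℝ) : Fq g h x x = 0 := by unfold Fq; ring_nf

lemma Fq_mono_right (hg : ContinuousOn g (Icc a b))
    (hg0 : ∀ t ∈ Set.Icc a b, 0 ≤ g t)
    (hgnz : ∀ p q : ℝ, a ≤ p → p < q → q ≤ b → ∃ t ∈ Set.Ioo p q, g t ≠ 0)
    (hh : ContinuousOn h (Icc a b)) (hhpos : ∀ t ∈ Set.Icc a b, 0 < h t)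
    {x y y' : ℝ} (ha : a ≤ x) (hxy : x ≤ y) (hyy : y < y') (hb : y' ≤ b) :
    Fq g h x y < Fq g h x y' := by
  rcases eq_or_lt_of_le hxy with rfl | hxy'
  · rw [Fq_self]
    exact Fq_pos hg hg0 hgnz hh hhpos ha hyy hb
  · have hb' : y ≤ b := by linarith
    have sg1 := Sg_pos hg hg0 hgnz ha hxy' hb'
    have sh1 := Sh_pos hh hhpos ha hxy hb'
    have sg2 := Smono hg ha (le_refl x) hxy hyy.le hb
    have sh2 := Smono hh ha (le_refl x) hxy hyy.le hb
    have hd : (0:ℝ) < y - x := by linarith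
    have hd2 : y - x < y' - x := by linarith
    unfold Fq
    calc (y - x) * sSup (g '' Icc x y) * sSup (h '' Icc x y)
        < (y' - x) * sSup (g '' Icc x y') * sSup (h '' Icc x y) := by
          apply mul_lt_mul_of_pos_right _ sh1
          nlinarith
      _ ≤ (y' - x) * sSup (g '' Icc x y') * sSup (h '' Icc x y') := by
          apply mul_le_mul_of_nonneg_left sh2
          nlinarith [lt_of_lt_of_le sg1 sg2]

lemma Fq_mono_left (hg : ContinuousOn g (Icc a b))
    (hg0 : ∀ t ∈ Set.Icc a b, 0 ≤ g t)
    (hgnz : ∀ p q : ℝ, a ≤ p → p < q → q ≤ b → ∃ t ∈ Set.Ioo p q, g t ≠ 0)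
    (hh : ContinuousOn h (Icc a b)) (hhpos : ∀ t ∈ Set.Icc a b, 0 < h t)
    {x x' y : ℝ} (ha : a ≤ x') (hxx : x' < x) (hxy : x ≤ y) (hb : y ≤ b) :
    Fq g h x y < Fq g h x' y := by
  rcases eq_or_lt_of_le hxy with rfl | hxy'
  · rw [Fq_self]
    exact Fq_pos hg hg0 hgnz hh hhpos ha hxx hb
  · have ha' : a ≤ x := by linarith
    have sg1 := Sg_pos hg hg0 hgnz ha' hxy' hb
    have sh1 := Sh_pos hh hhpos ha' hxy hb
    have sg2 := Smono hg ha hxx.le hxy (le_refl y) hb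
    have sh2 := Smono hh ha hxx.le hxy (le_refl y) hb
    have hd : (0:ℝ) < y - x := by linarith
    have hd2 : y - x < y - x' := by linarith
    unfold Fq
    calc (y - x) * sSup (g '' Icc x y) * sSup (h '' Icc x y)
        < (y - x') * sSup (g '' Icc x' y) * sSup (h '' Icc x y) := by
          apply mul_lt_mul_of_pos_right _ sh1
          nlinarith
      _ ≤ (y - x') * sSup (g '' Icc x' y) * sSup (h '' Icc x' y) := by
          apply mul_le_mul_of_nonneg_left sh2
          nlinarith [lt_of_lt_of_le sg1 sg2]

lemma Fq_cont (hg : ContinuousOn g (Icc a b)) (hh : ContinuousOn h (Icc a b)) :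
    ContinuousOn (fun p : ℝ × ℝ => Fq g h p.1 p.2)
      {p : ℝ × ℝ | a ≤ p.1 ∧ p.1 ≤ p.2 ∧ p.2 ≤ b} := by
  unfold Fq
  exact (((continuous_snd.sub continuous_fst).continuousOn).mul
    (sSup_image_Icc_cont hg)).mul (sSup_image_Icc_cont hh)

lemma adjacent_lemma {P : ℕ → Prop} {n k j : ℕ} (hk : k < n) (hj : j < n)
    (hPk : P k) (hPj : ¬ P j) :
    ∃ i, i + 1 < n ∧ ((P i ∧ ¬ P (i+1)) ∨ (¬ P i ∧ P (i+1))) := by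
  by_contra hcon
  push_neg at hcon
  have const : ∀ i, i + 1 < n → (P i ↔ P (i+1)) := by
    intro i hi
    have := hcon i hi
    tauto
  have key : ∀ i, i < n → (P i ↔ P 0) := by
    intro i
    induction i with
    | zero => intro _; rfl
    | succ i ih =>
      intro hi
      have h1 : i < n := Nat.lt_of_succ_lt hi
      exact ((const i hi).symm).trans (ih h1)
  exact hPj (((key j hj).trans (key k hk).symm).mpr hPk)

lemma continuousOn_finset_inf' {ι α : Type*} [TopologicalSpace α] {s : Finset ι}
    (hs : s.Nonempty) {f : ι → α → ℝ} {D : Set α}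
    (hf : ∀ i ∈ s, ContinuousOn (f i) D) :
    ContinuousOn (fun x => s.inf' hs (fun i => f i x)) D := by
  induction hs using Finset.Nonempty.cons_induction with
  | singleton a =>
    have e : (fun x => ({a} : Finset ι).inf' (Finset.singleton_nonempty a) fun i => f i x)
        = f a := by
      funext x; simp
    rw [e]
    exact hf a (by simp)
  | cons a s ha hs ih =>
    have e : (fun x => (Finset.cons a s ha).inf' (Finset.cons_nonempty ha) fun i => f i x)
        = fun x => (f a x) ⊓ (s.inf' hs fun i => f i x) := by
      funext x; rw [Finset.inf'_cons]
    rw [e]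
    exact (hf a (by simp)).inf (ih fun i hi => hf i (by simp [hi]))

end Aux

theorem equalizing_partition_exists
    (a b : ℝ) (hab : a < b) (g h : ℝ → ℝ)
    (hg : ContinuousOn g (Set.Icc a b))
    (hg0 : ∀ t ∈ Set.Icc a b, 0 ≤ g t)
    (hgnz : ∀ p q : ℝ, a ≤ p → p < q → q ≤ b → ∃ t ∈ Set.Ioo p q, g t ≠ 0)
    (hh : ContinuousOn h (Set.Icc a b))
    (hhpos : ∀ t ∈ Set.Icc a b, 0 < h t)
    (n : ℕ) (hn : 0 < n) :
    ∃ t : ℕ → ℝ, t 0 = a ∧ t n = b ∧ (∀ i < n, t i < t (i + 1)) ∧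
      ∃ J : ℝ, ∀ i < n,
        (t (i + 1) - t i) * sSup (g '' Set.Icc (t i) (t (i + 1))) *
          sSup (h '' Set.Icc (t i) (t (i + 1))) = J := by
  classical
  have hab' : a ≤ b := hab.le
  have hnR : (0:ℝ) < (n:ℝ) := by exact_mod_cast hn
  set S : Set (ℝ × ℝ) := {p : ℝ × ℝ | a ≤ p.1 ∧ p.1 ≤ p.2 ∧ p.2 ≤ b} with hSdef
  set Δ : Set (ℕ → ℝ) :=
    {t | (∀ i, t i ∈ Icc a b) ∧ t 0 = a ∧ t n = b ∧ ∀ i < n, t i ≤ t (i+1)} with hΔdef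
  have hne : (Finset.range n).Nonempty := ⟨0, by simpa using hn⟩
  set G : (ℕ → ℝ) → ℕ → ℝ := fun t i => Fq g h (t i) (t (i+1)) with hGdef
  set Φ : (ℕ → ℝ) → ℝ := fun t => (Finset.range n).inf' hne (G t) with hΦdef
  -- compactness of Δ
  have hΔsub : Δ ⊆ Set.univ.pi (fun _ : ℕ => Icc a b) := by
    intro t ht i _; exact ht.1 i
  have hclosed : IsClosed Δ := by
    have hrw : Δ = (⋂ i : ℕ, {t : ℕ → ℝ | t i ∈ Icc a b}) ∩
        ({t : ℕ → ℝ | t 0 = a} ∩ ({t : ℕ → ℝ | t n = b} ∩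
          ⋂ i : ℕ, {t : ℕ → ℝ | i < n → t i ≤ t (i+1)})) := by
      ext t
      simp only [hΔdef, Set.mem_setOf_eq, Set.mem_inter_iff, Set.mem_iInter]
      try tauto
    rw [hrw]
    apply IsClosed.inter
    · exact isClosed_iInter fun i => isClosed_Icc.preimage (continuous_apply i)
    apply IsClosed.inter
    · exact isClosed_eq (continuous_apply 0) continuous_const
    apply IsClosed.inter
    · exact isClosed_eq (continuous_apply n) continuous_const
    · refine isClosed_iInter fun i => ?_
      by_cases hi : i < n
      · simp only [hi, true_implies]
        exact isClosed_le (continuous_apply i) (continuous_apply (i+1))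
      · simp only [hi, false_implies, setOf_true]
        exact isClosed_univ
  have hcomp : IsCompact Δ :=
    IsCompact.of_isClosed_subset (isCompact_univ_pi fun _ => isCompact_Icc) hclosed hΔsub
  -- the uniform partition
  set u : ℕ → ℝ := fun i => a + ((min i n : ℕ) : ℝ) * ((b - a)/n) with hudef
  have humem : ∀ i, u i ∈ Icc a b := by
    intro i
    have h1 : (0:ℝ) ≤ ((min i n : ℕ) : ℝ) := Nat.cast_nonneg _
    have h2 : ((min i n : ℕ) : ℝ) ≤ (n:ℝ) := by exact_mod_cast Nat.min_le_right i n
    have hba : (0:ℝ) ≤ (b - a)/n := div_nonneg (by linarith) hnR.le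
    constructor
    · have : (0:ℝ) ≤ ((min i n : ℕ) : ℝ) * ((b - a)/n) := mul_nonneg h1 hba
      simp only [hudef]; linarith
    · simp only [hudef]
      have h3 : ((min i n : ℕ) : ℝ) * ((b - a)/n) ≤ (n:ℝ) * ((b - a)/n) :=
        mul_le_mul_of_nonneg_right h2 hba
      have he : (n:ℝ) * ((b - a)/n) = b - a := by
        field_simp
      linarith
  have hustep : ∀ i < n, u i < u (i+1) := by
    intro i hi
    have h1 : min i n = i := min_eq_left hi.le
    have h2 : min (i+1) n = i+1 := min_eq_left hi
    simp only [hudef, h1, h2]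
    have : (0:ℝ) < (b - a)/n := div_pos (by linarith) hnR
    push_cast
    nlinarith
  have huΔ : u ∈ Δ := by
    refine ⟨humem, ?_, ?_, fun i hi => (hustep i hi).le⟩
    · simp [hudef]
    · simp only [hudef, min_self]
      field_simp
      ring
  -- continuity of Φ
  have hGc : ∀ i ∈ Finset.range n, ContinuousOn (fun t : ℕ → ℝ => G t i) Δ := by
    intro i hi
    rw [Finset.mem_range] at hi
    have hmap : MapsTo (fun t : ℕ → ℝ => (t i, t (i+1))) Δ S :=
      fun t ht => ⟨(ht.1 i).1, ht.2.2.2 i hi, (ht.1 (i+1)).2⟩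
    exact (Fq_cont hg hh).comp
      (((continuous_apply i).prodMk (continuous_apply (i+1))).continuousOn) hmap
  have hΦc : ContinuousOn Φ Δ :=
    continuousOn_finset_inf' hne (f := fun i t => G t i) hGc
  obtain ⟨t₀, ht₀, hmax₀⟩ := hcomp.exists_isMaxOn ⟨u, huΔ⟩ hΦc
  set m := Φ t₀ with hmdef
  have hΦu : 0 < Φ u := by
    rw [hΦdef]
    rw [Finset.lt_inf'_iff]
    intro i hi
    rw [Finset.mem_range] at hi
    exact Fq_pos hg hg0 hgnz hh hhpos (humem i).1 (hustep i hi) (humem (i+1)).2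
  have hmpos : 0 < m := lt_of_lt_of_le hΦu (hmax₀ huΔ)
  -- minimize the number of minimal intervals among maximizers
  set cnt : (ℕ → ℝ) → ℕ :=
    fun t => ((Finset.range n).filter (fun i => G t i = m)).card with hcntdef
  set C : Set ℕ := {k | ∃ t, t ∈ Δ ∧ IsMaxOn Φ Δ t ∧ Φ t = m ∧ cnt t = k} with hCdef
  have hCne : C.Nonempty := ⟨cnt t₀, t₀, ht₀, hmax₀, rfl, rfl⟩
  obtain ⟨t1, ht1Δ, ht1max, ht1m, ht1cnt⟩ := Nat.sInf_mem hCne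
  -- basic facts about t1
  have hterm_ge : ∀ i < n, m ≤ G t1 i := by
    intro i hi
    rw [← ht1m]
    exact Finset.inf'_le (G t1) (Finset.mem_range.mpr hi)
  have hstep1 : ∀ i < n, t1 i ≤ t1 (i+1) := ht1Δ.2.2.2
  have hbound : ∀ i, t1 i ∈ Icc a b := ht1Δ.1
  have hall : ∀ i < n, G t1 i = m := by
    by_contra hno
    push_neg at hno
    obtain ⟨j, hj, hjne⟩ := hno
    obtain ⟨k, hkmem, hkeq⟩ := Finset.exists_mem_eq_inf' hne (G t1)
    have hkm : G t1 k = m := by rw [← hkeq]; exact ht1m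
    obtain ⟨i, hi1, hcase⟩ := adjacent_lemma (P := fun i => G t1 i = m)
      (Finset.mem_range.mp hkmem) hj hkm hjne
    have hi0 : i < n := Nat.lt_of_succ_lt hi1
    -- common notation
    set x0 := t1 i with hx0def
    set x1 := t1 (i+1) with hx1def
    set x2 := t1 (i+1+1) with hx2def
    have hax0 : a ≤ x0 := (hbound i).1
    have hax1 : a ≤ x1 := (hbound (i+1)).1
    have hx2b : x2 ≤ b := (hbound (i+1+1)).2
    have hx1b : x1 ≤ b := (hbound (i+1)).2
    have h01 : x0 ≤ x1 := hstep1 i hi0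
    have h12 : x1 ≤ x2 := hstep1 (i+1) hi1
    have hGi : G t1 i = Fq g h x0 x1 := rfl
    have hGi1 : G t1 (i+1) = Fq g h x1 x2 := rfl
    -- the improved partition t2, in each case
    rcases hcase with ⟨hPi, hPi1⟩ | ⟨hPi, hPi1⟩
    · -- G i = m, G (i+1) > m : move t1 (i+1) to the right
      have hgt : m < Fq g h x1 x2 := lt_of_le_of_ne (hGi1 ▸ hterm_ge (i+1) hi1)
        (by rw [← hGi1]; exact fun e => hPi1 e.symm)
      have hlt01 : x0 < x1 := by
        rcases eq_or_lt_of_le h01 with he | hlt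
        · exfalso
          rw [hGi, ← he, Fq_self] at hPi
          exact absurd hPi.symm (ne_of_gt hmpos)
        · exact hlt
      have hlt12 : x1 < x2 := by
        rcases eq_or_lt_of_le h12 with he | hlt
        · exfalso
          rw [← he, Fq_self] at hgt
          exact absurd hgt (not_lt_of_ge hmpos.le)
        · exact hlt
      have hmapA : MapsTo (fun s : ℝ => (s, x2)) (Icc x1 x2) S := by
        intro s hs
        exact ⟨le_trans hax1 hs.1, hs.2, hx2b⟩
      have hcW : ContinuousWithinAt (fun s => Fq g h s x2) (Icc x1 x2) x1 := by
        have := (Fq_cont hg hh).comp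
          ((continuous_id.prodMk continuous_const).continuousOn) hmapA
        exact this x1 (left_mem_Icc.mpr h12)
      have hev1 : {s : ℝ | m < Fq g h s x2} ∈ nhdsWithin x1 (Icc x1 x2) :=
        hcW (Ioi_mem_nhds hgt)
      have hsub2 : nhdsWithin x1 (Ioc x1 x2) ≤ nhdsWithin x1 (Icc x1 x2) :=
        nhdsWithin_mono _ Ioc_subset_Icc_self
      have hnb : (nhdsWithin x1 (Ioc x1 x2)).NeBot := by
        exact left_nhdsWithin_Ioc_neBot hlt12
      obtain ⟨s, hs1, hs2⟩ :=
        Filter.nonempty_of_mem (Filter.inter_mem (hsub2 hev1) self_mem_nhdsWithin)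
      set t2 : ℕ → ℝ := Function.update t1 (i+1) s with ht2def
      have ht2at : t2 (i+1) = s := Function.update_self _ _ _
      have ht2ne : ∀ j, j ≠ i+1 → t2 j = t1 j := fun j hj => Function.update_of_ne hj _ _
      have hsab : s ∈ Icc a b := ⟨le_trans hax1 hs2.1.le, le_trans hs2.2 hx2b⟩
      have hsb : s ≤ b := hsab.2
      have ht2mem : ∀ j, t2 j ∈ Icc a b := by
        intro j
        rcases eq_or_ne j (i+1) with rfl | hji
        · rw [ht2at]; exact hsab
        · rw [ht2ne j hji]; exact hbound j
      have ht2Δ : t2 ∈ Δ := by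
        refine ⟨ht2mem, ?_, ?_, ?_⟩
        · rw [ht2ne 0 (by omega)]; exact ht1Δ.2.1
        · rw [ht2ne n (by omega)]; exact ht1Δ.2.2.1
        · intro j hjn
          rcases eq_or_ne j (i+1) with rfl | hj1
          · rw [ht2at, ht2ne (i+1+1) (by omega)]
            exact hs2.2
          rcases eq_or_ne j i with heq | hj0
          · rw [heq, ht2ne i (by omega), ht2at]
            exact le_trans h01 hs2.1.le
          · rw [ht2ne j hj1, ht2ne (j+1) (by omega)]
            exact hstep1 j hjn
      have hv_i : G t2 i = Fq g h x0 s := by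
        show Fq g h (t2 i) (t2 (i+1)) = _
        rw [ht2ne i (by omega), ht2at]
      have hv_i_gt : m < G t2 i := by
        rw [hv_i]
        calc m = Fq g h x0 x1 := hPi.symm
          _ < Fq g h x0 s := Fq_mono_right hg hg0 hgnz hh hhpos hax0 h01 hs2.1 hsb
      have hv_i1 : G t2 (i+1) = Fq g h s x2 := by
        show Fq g h (t2 (i+1)) (t2 (i+1+1)) = _
        rw [ht2at, ht2ne (i+1+1) (by omega)]
      have hv_i1_gt : m < G t2 (i+1) := by rw [hv_i1]; exact hs1
      have hv_other : ∀ j, j ≠ i → j ≠ i+1 → G t2 j = G t1 j := by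
        intro j hja hjb
        show Fq g h (t2 j) (t2 (j+1)) = Fq g h (t1 j) (t1 (j+1))
        rw [ht2ne j hjb, ht2ne (j+1) (by omega)]
      have hge2 : ∀ j ∈ Finset.range n, m ≤ G t2 j := by
        intro j hjr
        rw [Finset.mem_range] at hjr
        rcases eq_or_ne j i with rfl | hja
        · exact hv_i_gt.le
        rcases eq_or_ne j (i+1) with rfl | hjb
        · exact hv_i1_gt.le
        · rw [hv_other j hja hjb]; exact hterm_ge j hjr
      have hΦt2 : Φ t2 = m :=
        le_antisymm (hmax₀ ht2Δ) ((Finset.le_inf'_iff hne _).mpr hge2)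
      have ht2max : IsMaxOn Φ Δ t2 := by
        intro y hy
        calc Φ y ≤ Φ t₀ := hmax₀ hy
          _ = Φ t2 := hΦt2.symm
      have hssub : (Finset.range n).filter (fun j => G t2 j = m) ⊆
          (Finset.range n).filter (fun j => G t1 j = m) := by
        intro j hjf
        rw [Finset.mem_filter] at hjf ⊢
        refine ⟨hjf.1, ?_⟩
        rcases eq_or_ne j i with rfl | hja
        · exact absurd hjf.2 (ne_of_gt hv_i_gt)
        rcases eq_or_ne j (i+1) with rfl | hjb
        · exact absurd hjf.2 (ne_of_gt hv_i1_gt)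
        · rw [← hv_other j hja hjb]; exact hjf.2
      have hfil : (Finset.range n).filter (fun j => G t2 j = m) ⊂
          (Finset.range n).filter (fun j => G t1 j = m) := by
        rw [Finset.ssubset_iff_of_subset hssub]
        refine ⟨i, Finset.mem_filter.mpr ⟨Finset.mem_range.mpr hi0, hPi⟩, ?_⟩
        intro hcontra
        exact (ne_of_gt hv_i_gt) (Finset.mem_filter.mp hcontra).2
      have hltc : cnt t2 < cnt t1 := Finset.card_lt_card hfil
      have hle : sInf C ≤ cnt t2 := Nat.sInf_le ⟨t2, ht2Δ, ht2max, hΦt2, rfl⟩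
      omega
    · -- G i > m, G (i+1) = m : move t1 (i+1) to the left
      have hgt : m < Fq g h x0 x1 := lt_of_le_of_ne (hGi ▸ hterm_ge i hi0)
        (by rw [← hGi]; exact fun e => hPi e.symm)
      have hlt12 : x1 < x2 := by
        rcases eq_or_lt_of_le h12 with he | hlt
        · exfalso
          rw [hGi1, ← he, Fq_self] at hPi1
          exact absurd hPi1.symm (ne_of_gt hmpos)
        · exact hlt
      have hlt01 : x0 < x1 := by
        rcases eq_or_lt_of_le h01 with he | hlt
        · exfalso
          rw [← he, Fq_self] at hgt
          exact absurd hgt (not_lt_of_ge hmpos.le)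
        · exact hlt
      have hmapB : MapsTo (fun s : ℝ => (x0, s)) (Icc x0 x1) S := by
        intro s hs
        exact ⟨hax0, hs.1, le_trans hs.2 hx1b⟩
      have hcW : ContinuousWithinAt (fun s => Fq g h x0 s) (Icc x0 x1) x1 := by
        have := (Fq_cont hg hh).comp
          ((continuous_const.prodMk continuous_id).continuousOn) hmapB
        exact this x1 (right_mem_Icc.mpr h01)
      have hev1 : {s : ℝ | m < Fq g h x0 s} ∈ nhdsWithin x1 (Icc x0 x1) :=
        hcW (Ioi_mem_nhds hgt)
      have hsub2 : nhdsWithin x1 (Ico x0 x1) ≤ nhdsWithin x1 (Icc x0 x1) :=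
        nhdsWithin_mono _ Ico_subset_Icc_self
      have hnb : (nhdsWithin x1 (Ico x0 x1)).NeBot := by
        exact right_nhdsWithin_Ico_neBot hlt01
      obtain ⟨s, hs1, hs2⟩ :=
        Filter.nonempty_of_mem (Filter.inter_mem (hsub2 hev1) self_mem_nhdsWithin)
      set t2 : ℕ → ℝ := Function.update t1 (i+1) s with ht2def
      have ht2at : t2 (i+1) = s := Function.update_self _ _ _
      have ht2ne : ∀ j, j ≠ i+1 → t2 j = t1 j := fun j hj => Function.update_of_ne hj _ _
      have hsab : s ∈ Icc a b := ⟨le_trans hax0 hs2.1, le_trans hs2.2.le hx1b⟩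
      have hsa : a ≤ s := hsab.1
      have ht2mem : ∀ j, t2 j ∈ Icc a b := by
        intro j
        rcases eq_or_ne j (i+1) with rfl | hji
        · rw [ht2at]; exact hsab
        · rw [ht2ne j hji]; exact hbound j
      have ht2Δ : t2 ∈ Δ := by
        refine ⟨ht2mem, ?_, ?_, ?_⟩
        · rw [ht2ne 0 (by omega)]; exact ht1Δ.2.1
        · rw [ht2ne n (by omega)]; exact ht1Δ.2.2.1
        · intro j hjn
          rcases eq_or_ne j (i+1) with rfl | hj1
          · rw [ht2at, ht2ne (i+1+1) (by omega)]
            exact le_trans hs2.2.le h12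
          rcases eq_or_ne j i with heq | hj0
          · rw [heq, ht2ne i (by omega), ht2at]
            exact hs2.1
          · rw [ht2ne j hj1, ht2ne (j+1) (by omega)]
            exact hstep1 j hjn
      have hv_i : G t2 i = Fq g h x0 s := by
        show Fq g h (t2 i) (t2 (i+1)) = _
        rw [ht2ne i (by omega), ht2at]
      have hv_i_gt : m < G t2 i := by rw [hv_i]; exact hs1
      have hv_i1 : G t2 (i+1) = Fq g h s x2 := by
        show Fq g h (t2 (i+1)) (t2 (i+1+1)) = _
        rw [ht2at, ht2ne (i+1+1) (by omega)]
      have hv_i1_gt : m < G t2 (i+1) := by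
        rw [hv_i1]
        calc m = Fq g h x1 x2 := by rw [← hGi1, hPi1]
          _ < Fq g h s x2 := Fq_mono_left hg hg0 hgnz hh hhpos hsa hs2.2 h12 hx2b
      have hv_other : ∀ j, j ≠ i → j ≠ i+1 → G t2 j = G t1 j := by
        intro j hja hjb
        show Fq g h (t2 j) (t2 (j+1)) = Fq g h (t1 j) (t1 (j+1))
        rw [ht2ne j hjb, ht2ne (j+1) (by omega)]
      have hge2 : ∀ j ∈ Finset.range n, m ≤ G t2 j := by
        intro j hjr
        rw [Finset.mem_range] at hjr
        rcases eq_or_ne j i with rfl | hja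
        · exact hv_i_gt.le
        rcases eq_or_ne j (i+1) with rfl | hjb
        · exact hv_i1_gt.le
        · rw [hv_other j hja hjb]; exact hterm_ge j hjr
      have hΦt2 : Φ t2 = m :=
        le_antisymm (hmax₀ ht2Δ) ((Finset.le_inf'_iff hne _).mpr hge2)
      have ht2max : IsMaxOn Φ Δ t2 := by
        intro y hy
        calc Φ y ≤ Φ t₀ := hmax₀ hy
          _ = Φ t2 := hΦt2.symm
      have hssub : (Finset.range n).filter (fun j => G t2 j = m) ⊆
          (Finset.range n).filter (fun j => G t1 j = m) := by
        intro j hjf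
        rw [Finset.mem_filter] at hjf ⊢
        refine ⟨hjf.1, ?_⟩
        rcases eq_or_ne j i with rfl | hja
        · exact absurd hjf.2 (ne_of_gt hv_i_gt)
        rcases eq_or_ne j (i+1) with rfl | hjb
        · exact absurd hjf.2 (ne_of_gt hv_i1_gt)
        · rw [← hv_other j hja hjb]; exact hjf.2
      have hfil : (Finset.range n).filter (fun j => G t2 j = m) ⊂
          (Finset.range n).filter (fun j => G t1 j = m) := by
        rw [Finset.ssubset_iff_of_subset hssub]
        refine ⟨i+1, Finset.mem_filter.mpr ⟨Finset.mem_range.mpr hi1, hPi1⟩, ?_⟩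
        intro hcontra
        exact (ne_of_gt hv_i1_gt) (Finset.mem_filter.mp hcontra).2
      have hltc : cnt t2 < cnt t1 := Finset.card_lt_card hfil
      have hle : sInf C ≤ cnt t2 := Nat.sInf_le ⟨t2, ht2Δ, ht2max, hΦt2, rfl⟩
      omega
  -- conclusion
  refine ⟨t1, ht1Δ.2.1, ht1Δ.2.2.1, ?_, ⟨m, ?_⟩⟩
  · intro i hi
    rcases eq_or_lt_of_le (hstep1 i hi) with he | hlt
    · exfalso
      have := hall i hi
      rw [hGdef] at this
      simp only [← he, Fq_self] at this
      exact absurd this.symm (ne_of_gt hmpos)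
    · exact hlt
  · intro i hi
    exact hall i hi
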